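/- Let ρ be a d×d density matrix and let Φ₁,…,Φ_N (N ≥ 3) be quantum channels on d×d matrices, where Φ_s has Kraus operators K₁ˢ,…,K_nˢ. Then for any permutations π₁,…,π_N of {1,…,n}, ∑_{s=1}^{N} I_ρ(Φ_s) ≥ (1/(N−2)) { ∑_{1≤s<t≤N} ∑_{i=1}^{n} I_ρ(K^s_{π_s(i)} + K^t_{π_t(i)}) − (1/(N−1)²) [ ∑_{1≤s<t≤N} √( ∑_{i=1}^{n} I_ρ(K^s_{π_s(i)} + K^t_{π_t(i)}) ) ]² }. -/

import Mathlib

open Matrix Finset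
open scoped ComplexOrder

/-- The positive semidefinite square root of a positive semidefinite matrix, as defined in
Mathlib (Dec 2024) under the name `Matrix.PosSemidef.sqrt` (since removed). -/
noncomputable def Matrix.PosSemidef.sqrt {n : Type*} [Fintype n] [DecidableEq n]
    {𝕜 : Type*} [RCLike 𝕜] {A : Matrix n n 𝕜} (hA : A.PosSemidef) : Matrix n n 𝕜 :=
  hA.1.eigenvectorUnitary.1 * diagonal ((↑) ∘ (√·) ∘ hA.1.eigenvalues) *
    (star hA.1.eigenvectorUnitary : Matrix n n 𝕜)

/-- Wigner–Yanase skew information `I_ρ(A) = (1/2) Tr([√ρ, A]† [√ρ, A])` of a matrix `A`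
with respect to a positive semidefinite matrix `ρ`, where `√ρ = hρ.sqrt` is the positive
semidefinite square root of `ρ`. -/
noncomputable def skewInfo {d : ℕ} {ρ : Matrix (Fin d) (Fin d) ℂ} (hρ : ρ.PosSemidef)
    (A : Matrix (Fin d) (Fin d) ℂ) : ℝ :=
  (1 / 2 : ℝ) *
    (((hρ.sqrt * A - A * hρ.sqrt)ᴴ * (hρ.sqrt * A - A * hρ.sqrt)).trace).re

/-- Off-diagonal pairing identity, specialized to `Fin N`. -/
lemma offdiag_aux {M : Type*} [AddCommMonoid M] {N : ℕ} (f : Fin N → Fin N → M) :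
    ∑ i, ∑ j ∈ Finset.Ioi i, (f j i + f i j) = ∑ i, ∑ j ∈ ({i}ᶜ : Finset (Fin N)), f j i := by
  have h := Finset.sum_sum_Ioi_add_eq_sum_sum_off_diag (f := f)
  convert h using 2 with i

/-- The abstract vector inequality behind the skew-information sum uncertainty relation. -/
lemma abstract_ineq {E : Type*} [NormedAddCommGroup E] [InnerProductSpace ℂ E]
    {N : ℕ} (hN : 3 ≤ N) (u : Fin N → E) :
    ∑ s, (1/2 : ℝ) * ‖u s‖ ^ 2 ≥
      (1 / ((N : ℝ) - 2)) *
        ((∑ s : Fin N, ∑ t ∈ Finset.Ioi s, (1/2 : ℝ) * ‖u s + u t‖ ^ 2)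
          - (1 / ((N : ℝ) - 1) ^ 2) *
            (∑ s : Fin N, ∑ t ∈ Finset.Ioi s, Real.sqrt ((1/2 : ℝ) * ‖u s + u t‖ ^ 2)) ^ 2) := by
  have hN3 : (3 : ℝ) ≤ (N : ℝ) := by exact_mod_cast hN
  have hN2 : (0 : ℝ) < (N : ℝ) - 2 := by linarith
  have hN1 : (0 : ℝ) < (N : ℝ) - 1 := by linarith
  set S : ℝ := ∑ s, ‖u s‖ ^ 2 with hS
  set M : ℝ := ‖∑ s, u s‖ with hM
  set P : ℝ := ∑ s : Fin N, ∑ t ∈ Finset.Ioi s, ‖u s + u t‖ ^ 2 with hPdef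
  set T : ℝ := ∑ s : Fin N, ∑ t ∈ Finset.Ioi s, ‖u s + u t‖ with hTdef
  have hcard : ∀ s : Fin N, (({s}ᶜ : Finset (Fin N)).card : ℝ) = (N : ℝ) - 1 := by
    intro s
    rw [Finset.card_compl, Finset.card_singleton, Fintype.card_fin]
    have h1 : 1 ≤ N := by omega
    push_cast [Nat.cast_sub h1]
    ring
  -- real part of inner products
  set r : Fin N → Fin N → ℝ := fun s t => RCLike.re (inner ℂ (u s) (u t) : ℂ) with hr
  have hrsym : ∀ s t, r t s = r s t := by
    intro s t
    simp only [hr, ← inner_conj_symm (u s) (u t), RCLike.conj_re]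
  -- M^2 = ∑ s, ∑ t, r s t
  have hM2 : M ^ 2 = ∑ s : Fin N, ∑ t : Fin N, r s t := by
    rw [hM, norm_sq_eq_re_inner (𝕜 := ℂ), sum_inner]
    simp only [inner_sum, map_sum, hr]
  have hdiag : ∀ s : Fin N, r s s = ‖u s‖ ^ 2 := fun s =>
    (norm_sq_eq_re_inner (𝕜 := ℂ) (u s)).symm
  have hsplit : ∀ s : Fin N, ∑ t : Fin N, r s t
      = r s s + ∑ t ∈ ({s}ᶜ : Finset (Fin N)), r s t := by
    intro s
    rw [← Finset.sum_compl_add_sum ({s} : Finset (Fin N)) (fun t => r s t),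
      Finset.sum_singleton, add_comm]
  -- off-diagonal: 2 * ∑_{s<t} r s t = M^2 - S
  have hoff : 2 * (∑ s : Fin N, ∑ t ∈ Finset.Ioi s, r s t) = M ^ 2 - S := by
    have h := offdiag_aux (f := r)
    have h2 : ∑ s : Fin N, ∑ t ∈ ({s}ᶜ : Finset (Fin N)), r t s = M ^ 2 - S := by
      rw [hM2, hS]
      have hrw : ∀ s : Fin N, ∑ t ∈ ({s}ᶜ : Finset (Fin N)), r t s
          = ∑ t ∈ ({s}ᶜ : Finset (Fin N)), r s t := by
        intro s; exact Finset.sum_congr rfl fun t _ => hrsym s t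
      rw [Finset.sum_congr rfl fun s _ => hrw s,
        Finset.sum_congr rfl fun s _ => hsplit s, Finset.sum_add_distrib]
      simp only [hdiag]
      ring
    calc 2 * (∑ s : Fin N, ∑ t ∈ Finset.Ioi s, r s t)
        = ∑ s : Fin N, ∑ t ∈ Finset.Ioi s, (r t s + r s t) := by
          rw [Finset.mul_sum]
          refine Finset.sum_congr rfl fun s _ => ?_
          rw [Finset.mul_sum]
          exact Finset.sum_congr rfl fun t _ => by rw [hrsym t s]; ring
      _ = ∑ s : Fin N, ∑ t ∈ ({s}ᶜ : Finset (Fin N)), r t s := h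
      _ = M ^ 2 - S := h2
  -- counting identity
  have hcount : ∑ s : Fin N, ∑ t ∈ Finset.Ioi s, (‖u s‖ ^ 2 + ‖u t‖ ^ 2)
      = ((N : ℝ) - 1) * S := by
    have h := offdiag_aux (f := fun _ t : Fin N => ‖u t‖ ^ 2)
    simp only [Finset.sum_const, nsmul_eq_mul] at h
    rw [h, hS, Finset.mul_sum]
    exact Finset.sum_congr rfl fun s _ => by rw [hcard s]
  -- identity (1): P = (N-2) S + M^2
  have hP : P = ((N : ℝ) - 2) * S + M ^ 2 := by
    calc P = (∑ s : Fin N, ∑ t ∈ Finset.Ioi s, (‖u s‖ ^ 2 + ‖u t‖ ^ 2))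
        + ∑ s : Fin N, ∑ t ∈ Finset.Ioi s, (2 * r s t) := by
          rw [hPdef, ← Finset.sum_add_distrib]
          refine Finset.sum_congr rfl fun s _ => ?_
          rw [← Finset.sum_add_distrib]
          refine Finset.sum_congr rfl fun t _ => ?_
          rw [norm_add_sq (𝕜 := ℂ)]; simp only [hr]; ring
      _ = ((N : ℝ) - 1) * S + (M ^ 2 - S) := by
          rw [hcount]
          congr 1
          rw [← hoff, Finset.mul_sum]
          exact Finset.sum_congr rfl fun s _ => (Finset.mul_sum _ _ _).symm
      _ = ((N : ℝ) - 2) * S + M ^ 2 := by ring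
  -- identity (2): ∑_{s<t} (u s + u t) = (N-1) • ∑ u
  have hvec : ∑ s : Fin N, ∑ t ∈ Finset.Ioi s, (u s + u t) = (N - 1 : ℕ) • ∑ s, u s := by
    have h := offdiag_aux (f := fun _ t : Fin N => u t)
    rw [h]
    simp only [Finset.sum_const, Finset.card_compl, Finset.card_singleton, Fintype.card_fin]
    rw [← Finset.smul_sum]
  -- inequality: (N-1) * M ≤ T
  have hMT : ((N : ℝ) - 1) * M ≤ T := by
    have h1 : ‖∑ s : Fin N, ∑ t ∈ Finset.Ioi s, (u s + u t)‖ ≤ T := by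
      rw [hTdef]
      calc ‖∑ s : Fin N, ∑ t ∈ Finset.Ioi s, (u s + u t)‖
          ≤ ∑ s : Fin N, ‖∑ t ∈ Finset.Ioi s, (u s + u t)‖ := norm_sum_le _ _
        _ ≤ ∑ s : Fin N, ∑ t ∈ Finset.Ioi s, ‖u s + u t‖ :=
            Finset.sum_le_sum fun s _ => norm_sum_le _ _
    rw [hvec, ← Nat.cast_smul_eq_nsmul ℝ, norm_smul] at h1
    have hcast : ‖((N - 1 : ℕ) : ℝ)‖ = (N : ℝ) - 1 := by
      have h1' : 1 ≤ N := by omega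
      rw [Real.norm_natCast]
      push_cast [Nat.cast_sub h1']
      ring
    rwa [hcast, ← hM] at h1
  have hM0 : 0 ≤ M := norm_nonneg _
  have hT0 : 0 ≤ T := by
    rw [hTdef]
    exact Finset.sum_nonneg fun s _ => Finset.sum_nonneg fun t _ => norm_nonneg _
  have hM2T : ((N : ℝ) - 1) ^ 2 * M ^ 2 ≤ T ^ 2 := by
    nlinarith [hMT, hM0, hT0, mul_nonneg hN1.le hM0]
  -- rewrite sqrt terms
  have hsqrt : ∀ x : E, Real.sqrt ((1/2 : ℝ) * ‖x‖ ^ 2) = Real.sqrt (1/2) * ‖x‖ := by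
    intro x
    rw [Real.sqrt_mul (by norm_num), Real.sqrt_sq (norm_nonneg x)]
  have hTs : (∑ s : Fin N, ∑ t ∈ Finset.Ioi s, Real.sqrt ((1/2 : ℝ) * ‖u s + u t‖ ^ 2))
      = Real.sqrt (1/2) * T := by
    rw [hTdef, Finset.mul_sum]
    refine Finset.sum_congr rfl fun s _ => ?_
    rw [Finset.mul_sum]
    exact Finset.sum_congr rfl fun t _ => hsqrt _
  have hPs : (∑ s : Fin N, ∑ t ∈ Finset.Ioi s, (1/2 : ℝ) * ‖u s + u t‖ ^ 2)
      = (1/2 : ℝ) * P := by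
    rw [hPdef, Finset.mul_sum]
    refine Finset.sum_congr rfl fun s _ => ?_
    rw [Finset.mul_sum]
  have hhalfS : ∑ s, (1/2 : ℝ) * ‖u s‖ ^ 2 = (1/2 : ℝ) * S := by
    rw [hS, Finset.mul_sum]
  rw [hhalfS, hPs, hTs]
  have hsq2 : Real.sqrt (1/2 : ℝ) ^ 2 = 1/2 := Real.sq_sqrt (by norm_num)
  rw [mul_pow, hsq2, ge_iff_le, one_div ((N : ℝ) - 2), inv_mul_le_iff₀ hN2]
  rw [hP]
  set c : ℝ := ((N : ℝ) - 1) ^ 2 with hc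
  have hc0 : (0 : ℝ) < c := by positivity
  have key : (1/2 : ℝ) * M ^ 2 ≤ 1 / c * (1/2 * T ^ 2) := by
    have hdiff : 1 / c * (1/2 * T ^ 2) - 1/2 * M ^ 2 = (T ^ 2 - c * M ^ 2) / (2 * c) := by
      field_simp
    have hnum : 0 ≤ (T ^ 2 - c * M ^ 2) / (2 * c) :=
      div_nonneg (by linarith [hM2T]) (by positivity)
    linarith [hdiff, hnum]
  nlinarith [key]

theorem stmt_0 {d n N : ℕ} (hN : 3 ≤ N)
    (ρ : Matrix (Fin d) (Fin d) ℂ) (hρ : ρ.PosSemidef) (htr : ρ.trace = 1)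
    (K : Fin N → Fin n → Matrix (Fin d) (Fin d) ℂ)
    (hK : ∀ s, ∑ i, (K s i)ᴴ * K s i = 1)
    (π : Fin N → Equiv.Perm (Fin n)) :
    ∑ s, ∑ i, skewInfo hρ (K s i) ≥
      (1 / ((N : ℝ) - 2)) *
        ((∑ s : Fin N, ∑ t ∈ Finset.Ioi s, ∑ i, skewInfo hρ (K s (π s i) + K t (π t i)))
          - (1 / ((N : ℝ) - 1) ^ 2) *
            (∑ s : Fin N, ∑ t ∈ Finset.Ioi s,
              Real.sqrt (∑ i, skewInfo hρ (K s (π s i) + K t (π t i)))) ^ 2) := by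
  -- commutator map
  set B : Matrix (Fin d) (Fin d) ℂ → Matrix (Fin d) (Fin d) ℂ :=
    fun A => hρ.sqrt * A - A * hρ.sqrt with hB
  have hBadd : ∀ A A', B (A + A') = B A + B A' := by
    intro A A'
    simp only [hB, Matrix.mul_add, Matrix.add_mul]
    abel
  -- skew info as a sum of squared norms of entries
  have hskew : ∀ A, skewInfo hρ A = (1/2 : ℝ) * ∑ p : Fin d × Fin d, ‖(B A) p.1 p.2‖ ^ 2 := by
    intro A
    rw [skewInfo]
    congr 1
    rw [Matrix.trace]
    simp only [Matrix.diag_apply, Matrix.mul_apply, Matrix.conjTranspose_apply]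
    rw [Complex.re_sum]
    rw [Fintype.sum_prod_type]
    rw [Finset.sum_comm]
    refine Finset.sum_congr rfl fun j _ => ?_
    rw [Complex.re_sum]
    refine Finset.sum_congr rfl fun k _ => ?_
    have : ∀ z : ℂ, ((starRingEnd ℂ) z * z).re = ‖z‖ ^ 2 := by
      intro z
      rw [mul_comm, Complex.mul_conj, Complex.normSq_eq_norm_sq, Complex.ofReal_re]
    exact this _
  -- the vectors
  set u : Fin N → EuclideanSpace ℂ (Fin n × Fin d × Fin d) :=
    fun s => WithLp.toLp 2 (fun q : Fin n × Fin d × Fin d => B (K s (π s q.1)) q.2.1 q.2.2) with hu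
  have hnorm2 : ∀ (x : EuclideanSpace ℂ (Fin n × Fin d × Fin d)),
      ‖x‖ ^ 2 = ∑ q, ‖x q‖ ^ 2 := by
    intro x
    rw [EuclideanSpace.norm_eq, Real.sq_sqrt]
    exact Finset.sum_nonneg fun q _ => sq_nonneg _
  -- single-channel sums
  have hsingle : ∀ s, ∑ i, skewInfo hρ (K s i) = (1/2 : ℝ) * ‖u s‖ ^ 2 := by
    intro s
    rw [← Equiv.sum_comp (π s) (fun i => skewInfo hρ (K s i))]
    rw [hnorm2, Finset.mul_sum]
    rw [show (∑ q : Fin n × Fin d × Fin d, (1/2 : ℝ) * ‖u s q‖ ^ 2)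
        = ∑ i : Fin n, ∑ p : Fin d × Fin d, (1/2 : ℝ) * ‖u s (i, p)‖ ^ 2 from
      Fintype.sum_prod_type _]
    refine Finset.sum_congr rfl fun i _ => ?_
    rw [hskew, Finset.mul_sum]
  -- pair sums
  have hpair : ∀ s t, ∑ i, skewInfo hρ (K s (π s i) + K t (π t i))
      = (1/2 : ℝ) * ‖u s + u t‖ ^ 2 := by
    intro s t
    rw [hnorm2, Finset.mul_sum]
    rw [show (∑ q : Fin n × Fin d × Fin d, (1/2 : ℝ) * ‖(u s + u t) q‖ ^ 2)
        = ∑ i : Fin n, ∑ p : Fin d × Fin d, (1/2 : ℝ) * ‖(u s + u t) (i, p)‖ ^ 2 from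
      Fintype.sum_prod_type _]
    refine Finset.sum_congr rfl fun i _ => ?_
    rw [hskew, Finset.mul_sum]
    refine Finset.sum_congr rfl fun p _ => ?_
    congr 2
    have h1 : (u s + u t) (i, p) = u s (i, p) + u t (i, p) := rfl
    rw [h1, hu]
    simp only [hBadd]
    rfl
  have habs := abstract_ineq hN u
  calc (1 / ((N : ℝ) - 2)) *
        ((∑ s : Fin N, ∑ t ∈ Finset.Ioi s, ∑ i, skewInfo hρ (K s (π s i) + K t (π t i)))
          - (1 / ((N : ℝ) - 1) ^ 2) *
            (∑ s : Fin N, ∑ t ∈ Finset.Ioi s,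
              Real.sqrt (∑ i, skewInfo hρ (K s (π s i) + K t (π t i)))) ^ 2)
      = (1 / ((N : ℝ) - 2)) *
        ((∑ s : Fin N, ∑ t ∈ Finset.Ioi s, (1/2 : ℝ) * ‖u s + u t‖ ^ 2)
          - (1 / ((N : ℝ) - 1) ^ 2) *
            (∑ s : Fin N, ∑ t ∈ Finset.Ioi s,
              Real.sqrt ((1/2 : ℝ) * ‖u s + u t‖ ^ 2)) ^ 2) := by
        congr 1
        congr 1
        · exact Finset.sum_congr rfl fun s _ => Finset.sum_congr rfl fun t _ => hpair s t
        · congr 2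
          exact Finset.sum_congr rfl fun s _ => Finset.sum_congr rfl fun t _ => by
            rw [hpair s t]
    _ ≤ ∑ s, (1/2 : ℝ) * ‖u s‖ ^ 2 := habs
    _ = ∑ s, ∑ i, skewInfo hρ (K s i) :=
        Finset.sum_congr rfl fun s _ => (hsingle s).symm
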